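/- Let M be the commutative monoid presented by generators X_{a,b} and the swap relations [v⃗_1, i, v⃗_2] + [w⃗_1, i, w⃗_2] = [v⃗_1, i, w⃗_2] + [w⃗_1, i, v⃗_2] (for all tuples sharing entry i at a common position). Then M is cancellative and isomorphic to the submonoid of ℕ^{X-coordinates} given by the fiber product P(a,b); in particular the binomial ideal generated by the swap relations is prime. -/

import Mathlib

/-- The set `X_{a,b}` of tuples over `ℤ/mℤ`. -/
def Xab (m a b : ℕ) : Set (Fin (a + b - 1) → ZMod m) :=
  {i | ∃ h0 : 0 < a + b - 1, ∃ hl : a + b - 2 < a + b - 1,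
    i ⟨0, h0⟩ ∈ ({0, ((m - 1 : ℕ) : ZMod m)} : Set (ZMod m)) ∧
    i ⟨a + b - 2, hl⟩ ∈ ({0, ((m - 1 : ℕ) : ZMod m)} : Set (ZMod m)) ∧
    ∀ (k : ℕ) (hk : k + 1 < a + b - 1),
      (k < a - 1 → i ⟨k, by omega⟩ - i ⟨k + 1, hk⟩ ∈ ({0, 1} : Set (ZMod m))) ∧
      (a - 1 ≤ k → i ⟨k, by omega⟩ - i ⟨k + 1, hk⟩ ∈ ({0, -1} : Set (ZMod m)))}

/-- Ambient product of the free K-Pieri monoids at the internal vertices. -/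
abbrev BigM (m a b : ℕ) := Fin (a + b - 2) → ((ZMod m × ZMod m) →₀ ℕ)

/-- Validity of a generator label at slot `s` for the K-Pieri semigroups. -/
def validPair (m a b : ℕ) (s : ℕ) (p : ZMod m × ZMod m) : Prop :=
  (s < a - 1 → p.1 - p.2 ∈ ({0, 1} : Set (ZMod m))) ∧
  (a - 1 ≤ s → p.1 - p.2 ∈ ({0, -1} : Set (ZMod m))) ∧
  (s = 0 → p.1 ∈ ({0, ((m - 1 : ℕ) : ZMod m)} : Set (ZMod m))) ∧
  (s = a + b - 3 → p.2 ∈ ({0, ((m - 1 : ℕ) : ZMod m)} : Set (ZMod m)))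

/-- Embedding a tuple of `X_{a,b}` into the product of the free K-Pieri monoids. -/
noncomputable def embP (m a b : ℕ) (i : Fin (a + b - 1) → ZMod m) : BigM m a b :=
  fun s => match s with
  | ⟨sv, hs⟩ => Finsupp.single (i ⟨sv, by omega⟩, i ⟨sv + 1, by omega⟩) 1

/-- The generators of the presented monoid: elements of `X_{a,b}`. -/
def XType (m a b : ℕ) := {i : Fin (a + b - 1) → ZMod m // i ∈ Xab m a b}

/-- The swap relations on the free commutative monoid on `X_{a,b}`:
`[v⃗₁, i, v⃗₂] + [w⃗₁, i, w⃗₂] = [v⃗₁, i, w⃗₂] + [w⃗₁, i, v⃗₂]` for tuples sharing the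
entry `i` at a common position. -/
noncomputable def swapRel (m a b : ℕ) :
    (XType m a b →₀ ℕ) → (XType m a b →₀ ℕ) → Prop :=
  fun x y => ∃ (g h g' h' : XType m a b) (k : Fin (a + b - 1)),
    g.val k = h.val k ∧
    (∀ j, g'.val j = if j ≤ k then g.val j else h.val j) ∧
    (∀ j, h'.val j = if j ≤ k then h.val j else g.val j) ∧
    x = Finsupp.single g 1 + Finsupp.single h 1 ∧
    y = Finsupp.single g' 1 + Finsupp.single h' 1

/-- Evaluation of formal sums of generators in the fiber product. -/
noncomputable def evalHom (m a b : ℕ) : (XType m a b →₀ ℕ) →+ BigM m a b :=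
  Finsupp.liftAddHom (fun g => (multiplesHom (BigM m a b)) (embP m a b g.val))


namespace PabAux

variable {m a b : ℕ}

/-- the pair of a tuple at slot `s`. -/
def pairAt (s : Fin (a + b - 2)) (i : Fin (a + b - 1) → ZMod m) : ZMod m × ZMod m :=
  (i ⟨s.val, by have := s.isLt; omega⟩, i ⟨s.val + 1, by have := s.isLt; omega⟩)

lemma embP_apply (i : Fin (a + b - 1) → ZMod m) (s : Fin (a + b - 2)) :
    embP m a b i s = Finsupp.single (pairAt s i) 1 := by
  rcases s with ⟨sv, hs⟩; rfl

lemma evalHom_single (g : XType m a b) (n : ℕ) :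
    evalHom m a b (Finsupp.single g n) = n • embP m a b g.val := by
  simp [evalHom]

lemma evalHom_apply (x : XType m a b →₀ ℕ) (s : Fin (a + b - 2)) :
    evalHom m a b x s = Finsupp.mapDomain (fun g : XType m a b => pairAt s g.val) x := by
  induction x using Finsupp.induction with
  | zero => simp
  | single_add g n x _ _ ih =>
      rw [map_add, Finsupp.mapDomain_add, Pi.add_apply, ih, evalHom_single,
        Finsupp.mapDomain_single]
      congr 1
      rw [Pi.smul_apply, embP_apply, Finsupp.smul_single, smul_eq_mul, mul_one]

lemma mem_support_mapDomain {α β : Type*} (f : α → β) (x : α →₀ ℕ) {g : α}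
    (hg : g ∈ x.support) : f g ∈ (Finsupp.mapDomain f x).support := by
  classical
  have h1 : x = (x.erase g) + Finsupp.single g (x g) := by
    ext c
    by_cases hc : c = g
    · simp [hc]
    · simp [Finsupp.erase_ne hc, Finsupp.single_apply, Ne.symm hc]
  have hxg : x g ≠ 0 := Finsupp.mem_support_iff.mp hg
  rw [Finsupp.mem_support_iff, h1, Finsupp.mapDomain_add, Finsupp.mapDomain_single,
    Finsupp.add_apply, Finsupp.single_eq_same]
  omega

lemma exists_preimage {α β : Type*} (f : α → β) (x : α →₀ ℕ) {p : β}
    (hp : p ∈ (Finsupp.mapDomain f x).support) : ∃ g ∈ x.support, f g = p := by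
  classical
  have := Finsupp.mapDomain_support hp
  simpa using this

/-- mass of a finsupp -/
def mass {α : Type*} (x : α →₀ ℕ) : ℕ := x.sum fun _ n => n

lemma mass_mapDomain {α β : Type*} (f : α → β) (x : α →₀ ℕ) :
    mass (Finsupp.mapDomain f x) = mass x := by
  classical
  exact Finsupp.sum_mapDomain_index (fun _ => rfl) (fun _ _ _ => rfl)

lemma mass_add {α : Type*} (x y : α →₀ ℕ) : mass (x + y) = mass x + mass y := by
  classical
  exact Finsupp.sum_add_index (fun _ _ => rfl) (fun _ _ _ _ => rfl)

lemma mass_single {α : Type*} (g : α) (n : ℕ) : mass (Finsupp.single g n) = n := by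
  classical
  simp [mass, Finsupp.sum_single_index]

lemma eq_zero_of_mass_eq_zero {α : Type*} (x : α →₀ ℕ) (h : mass x = 0) : x = 0 := by
  classical
  ext c
  by_cases hc : c ∈ x.support
  · exfalso
    have : x c ≤ mass x := Finset.single_le_sum (f := fun g => x g) (fun _ _ => Nat.zero_le _) hc
    have := Finsupp.mem_support_iff.mp hc
    omega
  · simpa using Finsupp.notMem_support_iff.mp hc

lemma sub_single_add {α : Type*} (x : α →₀ ℕ) (g : α) (hg : g ∈ x.support) :
    x - Finsupp.single g 1 + Finsupp.single g 1 = x := by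
  classical
  have hxg : x g ≠ 0 := Finsupp.mem_support_iff.mp hg
  ext c
  by_cases hc : g = c
  · subst hc
    simp only [Finsupp.add_apply, Finsupp.tsub_apply, Finsupp.single_eq_same]
    omega
  · simp [Finsupp.add_apply, Finsupp.tsub_apply, Finsupp.single_eq_of_ne' hc]

lemma sub_two_single_add {α : Type*} (x : α →₀ ℕ) (g h : α) (hgh : g ≠ h)
    (hg : g ∈ x.support) (hh : h ∈ x.support) :
    x - Finsupp.single g 1 - Finsupp.single h 1 +
      (Finsupp.single g 1 + Finsupp.single h 1) = x := by
  classical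
  have hxg : x g ≠ 0 := Finsupp.mem_support_iff.mp hg
  have hxh : x h ≠ 0 := Finsupp.mem_support_iff.mp hh
  ext c
  by_cases hc : g = c
  · subst hc
    simp only [Finsupp.add_apply, Finsupp.tsub_apply, Finsupp.single_eq_same,
      Finsupp.single_eq_of_ne' (Ne.symm hgh) ]
    omega
  · by_cases hc2 : h = c
    · subst hc2
      simp only [Finsupp.add_apply, Finsupp.tsub_apply, Finsupp.single_eq_same,
        Finsupp.single_eq_of_ne' hc]
      omega
    · simp [Finsupp.add_apply, Finsupp.tsub_apply, Finsupp.single_eq_of_ne' hc,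
        Finsupp.single_eq_of_ne' hc2]

end PabAux
namespace PabAux

variable {m a b : ℕ}

/-- splice two tuples at position `k`. -/
def splice (g h : Fin (a + b - 1) → ZMod m) (k : Fin (a + b - 1)) :
    Fin (a + b - 1) → ZMod m := fun j => if j ≤ k then g j else h j

lemma splice_mem {g h : Fin (a + b - 1) → ZMod m} (k : Fin (a + b - 1))
    (hg : g ∈ Xab m a b) (hh : h ∈ Xab m a b) (hk : g k = h k) :
    splice g h k ∈ Xab m a b := by
  obtain ⟨h0, hl, hg0, hgl, hgd⟩ := hg
  obtain ⟨_, _, hh0, hhl, hhd⟩ := hh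
  refine ⟨h0, hl, ?_, ?_, ?_⟩
  · by_cases hc : (⟨0, h0⟩ : Fin (a + b - 1)) ≤ k
    · simpa [splice, hc] using hg0
    · simpa [splice, hc] using hh0
  · by_cases hc : (⟨a + b - 2, hl⟩ : Fin (a + b - 1)) ≤ k
    · simpa [splice, hc] using hgl
    · simpa [splice, hc] using hhl
  · intro t ht
    have hkv := k.isLt
    rcases lt_trichotomy t k.val with hcase | hcase | hcase
    · have h1 : (⟨t, by omega⟩ : Fin (a + b - 1)) ≤ k := by
        simp [Fin.le_def]; omega
      have h2 : (⟨t + 1, ht⟩ : Fin (a + b - 1)) ≤ k := by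
        simp [Fin.le_def]; omega
      simpa [splice, h1, h2] using hgd t ht
    · have h1 : (⟨t, by omega⟩ : Fin (a + b - 1)) ≤ k := by
        simp [Fin.le_def]; omega
      have h2 : ¬ (⟨t + 1, ht⟩ : Fin (a + b - 1)) ≤ k := by
        simp [Fin.le_def]; omega
      have hkt : k = (⟨t, by omega⟩ : Fin (a + b - 1)) := by
        apply Fin.ext; simp [hcase]
      have hgh : g ⟨t, by omega⟩ = h ⟨t, by omega⟩ := by rw [← hkt]; exact hk
      simp only [splice, h1, h2, if_true, if_false, hgh]
      exact hhd t ht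
    · have h1 : ¬ (⟨t, by omega⟩ : Fin (a + b - 1)) ≤ k := by
        simp [Fin.le_def]; omega
      have h2 : ¬ (⟨t + 1, ht⟩ : Fin (a + b - 1)) ≤ k := by
        simp [Fin.le_def]; omega
      simpa [splice, h1, h2] using hhd t ht

lemma pairAt_splice_add {g h : Fin (a + b - 1) → ZMod m} (k : Fin (a + b - 1))
    (hk : g k = h k) (s : Fin (a + b - 2)) :
    (Finsupp.single (pairAt s (splice g h k)) 1 + Finsupp.single (pairAt s (splice h g k)) 1
      : (ZMod m × ZMod m) →₀ ℕ)
      = Finsupp.single (pairAt s g) 1 + Finsupp.single (pairAt s h) 1 := by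
  have hs := s.isLt
  rcases lt_trichotomy s.val k.val with hcase | hcase | hcase
  · have h1 : (⟨s.val, by omega⟩ : Fin (a + b - 1)) ≤ k := by simp [Fin.le_def]; omega
    have h2 : (⟨s.val + 1, by omega⟩ : Fin (a + b - 1)) ≤ k := by simp [Fin.le_def]; omega
    simp [pairAt, splice, h1, h2]
  · have h1 : (⟨s.val, by omega⟩ : Fin (a + b - 1)) ≤ k := by simp [Fin.le_def]; omega
    have h2 : ¬ (⟨s.val + 1, by omega⟩ : Fin (a + b - 1)) ≤ k := by simp [Fin.le_def]; omega
    have hkt : k = (⟨s.val, by omega⟩ : Fin (a + b - 1)) := by apply Fin.ext; simp [hcase]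
    have hgh : g ⟨s.val, by omega⟩ = h ⟨s.val, by omega⟩ := by rw [← hkt]; exact hk
    simp only [pairAt, splice, h1, h2, if_true, if_false, hgh]
    exact add_comm _ _
  · have h1 : ¬ (⟨s.val, by omega⟩ : Fin (a + b - 1)) ≤ k := by simp [Fin.le_def]; omega
    have h2 : ¬ (⟨s.val + 1, by omega⟩ : Fin (a + b - 1)) ≤ k := by simp [Fin.le_def]; omega
    simp only [pairAt, splice, h1, h2, if_false]
    exact add_comm _ _

lemma swapRel_ker {x y : XType m a b →₀ ℕ} (hr : swapRel m a b x y) :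
    evalHom m a b x = evalHom m a b y := by
  obtain ⟨g, h, g', h', k, hk, hg', hh', hx, hy⟩ := hr
  subst hx; subst hy
  have hg'v : g'.val = splice g.val h.val k := by funext j; rw [hg' j]; rfl
  have hh'v : h'.val = splice h.val g.val k := by funext j; rw [hh' j]; rfl
  funext s
  rw [map_add, map_add, Pi.add_apply, Pi.add_apply]
  rw [evalHom_single, evalHom_single, evalHom_single, evalHom_single]
  simp only [one_smul, Pi.add_apply, embP_apply, hg'v, hh'v]
  rw [pairAt_splice_add k hk s]

end PabAux
namespace PabAux

variable {m a b : ℕ}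

lemma addConGen_ker {x y : XType m a b →₀ ℕ}
    (h : (addConGen (swapRel m a b)) x y) : evalHom m a b x = evalHom m a b y := by
  have := (AddCon.addConGen_le (c := AddCon.ker (evalHom m a b))).mpr
    (fun u v huv => (AddCon.ker_rel _).mpr (swapRel_ker huv))
  exact (AddCon.ker_rel _).mp (this h)

lemma proj_eq_of_eval_eq {x y : XType m a b →₀ ℕ}
    (h : evalHom m a b x = evalHom m a b y) (s : Fin (a + b - 2)) :
    Finsupp.mapDomain (fun g : XType m a b => pairAt s g.val) x
      = Finsupp.mapDomain (fun g : XType m a b => pairAt s g.val) y := by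
  rw [← evalHom_apply, ← evalHom_apply, h]

lemma key_step (ha : 2 ≤ a) (hb : 2 ≤ b) {x y : XType m a b →₀ ℕ}
    (g : XType m a b) (hgx : g ∈ x.support)
    (heq : evalHom m a b x = evalHom m a b y) :
    ∃ y', (addConGen (swapRel m a b)) y y' ∧ g ∈ y'.support := by
  classical
  have hab : 4 ≤ a + b := by omega
  -- claim by induction on t
  have claim : ∀ t : ℕ, t + 1 < a + b - 1 →
      ∃ y', (addConGen (swapRel m a b)) y y' ∧
        ∃ hh : XType m a b, hh ∈ y'.support ∧
          ∀ j : Fin (a + b - 1), j.val ≤ t + 1 → hh.val j = g.val j := by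
    intro t
    induction t with
    | zero =>
        intro ht
        have hs0 : (0 : ℕ) < a + b - 2 := by omega
        have hp := proj_eq_of_eval_eq heq ⟨0, hs0⟩
        have hmem := mem_support_mapDomain (fun g : XType m a b => pairAt ⟨0, hs0⟩ g.val) x hgx
        rw [hp] at hmem
        obtain ⟨hh, hhy, hhp⟩ := exists_preimage _ y hmem
        refine ⟨y, AddCon.refl _ y, hh, hhy, ?_⟩
        intro j hj
        have h01 := congrArg Prod.fst hhp
        have h02 := congrArg Prod.snd hhp
        simp only [pairAt] at h01 h02
        interval_cases hv : j.val
        · have : j = (⟨0, by omega⟩ : Fin (a + b - 1)) := Fin.ext hv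
          rw [this]; exact h01
        · have : j = (⟨1, by omega⟩ : Fin (a + b - 1)) := Fin.ext hv
          rw [this]; exact h02
    | succ t ih =>
        intro ht
        obtain ⟨y', hyy', hh, hhy', hhag⟩ := ih (by omega)
        have hs : t + 1 < a + b - 2 := by omega
        set s : Fin (a + b - 2) := ⟨t + 1, hs⟩ with hsdef
        have heq' : evalHom m a b x = evalHom m a b y' := heq.trans (addConGen_ker hyy')
        have hp := proj_eq_of_eval_eq heq' s
        have hmem := mem_support_mapDomain (fun g : XType m a b => pairAt s g.val) x hgx
        rw [hp] at hmem
        obtain ⟨h2, h2y, h2p⟩ := exists_preimage _ y' hmem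
        have h21 : h2.val ⟨t + 1, by omega⟩ = g.val ⟨t + 1, by omega⟩ :=
          congrArg Prod.fst h2p
        have h22 : h2.val ⟨t + 2, by omega⟩ = g.val ⟨t + 2, by omega⟩ :=
          congrArg Prod.snd h2p
        by_cases hdone : hh.val ⟨t + 2, by omega⟩ = g.val ⟨t + 2, by omega⟩
        · refine ⟨y', hyy', hh, hhy', ?_⟩
          intro j hj
          rcases Nat.lt_or_ge j.val (t + 2) with hc | hc
          · exact hhag j (by omega)
          · have : j = (⟨t + 2, by omega⟩ : Fin (a + b - 1)) := Fin.ext (by show j.val = t + 2; omega)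
            rw [this]; exact hdone
        · -- swap hh and h2 at position k = t+1
          set k : Fin (a + b - 1) := ⟨t + 1, by omega⟩ with hkdef
          have hhk : hh.val k = h2.val k := by
            rw [h21]; exact hhag k (by simp [hkdef])
          have hne : hh ≠ h2 := by
            intro hc; rw [hc] at hdone; exact hdone h22
          set c1 : XType m a b := ⟨splice hh.val h2.val k, splice_mem k hh.2 h2.2 hhk⟩
          set c2 : XType m a b := ⟨splice h2.val hh.val k, splice_mem k h2.2 hh.2 hhk.symm⟩
          have hrel : swapRel m a b (Finsupp.single hh 1 + Finsupp.single h2 1)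
              (Finsupp.single c1 1 + Finsupp.single c2 1) :=
            ⟨hh, h2, c1, c2, k, hhk, fun j => rfl, fun j => rfl, rfl, rfl⟩
          set z := y' - Finsupp.single hh 1 - Finsupp.single h2 1
          have hz : z + (Finsupp.single hh 1 + Finsupp.single h2 1) = y' :=
            sub_two_single_add y' hh h2 hne hhy' h2y
          set y'' := z + (Finsupp.single c1 1 + Finsupp.single c2 1) with hy''
          have hrel2 : (addConGen (swapRel m a b)) y' y'' := by
            rw [← hz, hy'']
            exact AddCon.add _ (AddCon.refl _ z) (AddConGen.Rel.of _ _ hrel)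
          refine ⟨y'', (AddCon.trans _ hyy' hrel2), c1, ?_, ?_⟩
          · rw [Finsupp.mem_support_iff, hy'']
            simp only [Finsupp.add_apply, Finsupp.single_eq_same]
            omega
          · intro j hj
            rcases Nat.lt_or_ge j.val (t + 2) with hc | hc
            · have hjk : j ≤ k := by
                rw [Fin.le_def]
                exact Nat.lt_succ_iff.mp hc
              show splice hh.val h2.val k j = g.val j
              rw [splice, if_pos hjk]
              exact hhag j (by omega)
            · have hjv : j = (⟨t + 2, by omega⟩ : Fin (a + b - 1)) := Fin.ext (by show j.val = t + 2; omega)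
              have hjk : ¬ j ≤ k := by
                rw [Fin.le_def, hjv]
                exact Nat.not_succ_le_self (t + 1)
              show splice hh.val h2.val k j = g.val j
              rw [splice, if_neg hjk, hjv]
              exact h22
  obtain ⟨y', hyy', hh, hhy', hhag⟩ := claim (a + b - 3) (by omega)
  have : hh = g := by
    apply Subtype.ext
    funext j
    exact hhag j (by have := j.isLt; omega)
  exact ⟨y', hyy', this ▸ hhy'⟩

lemma key (ha : 2 ≤ a) (hb : 2 ≤ b) :
    ∀ (n : ℕ) (x y : XType m a b →₀ ℕ), mass x = n →
      evalHom m a b x = evalHom m a b y → (addConGen (swapRel m a b)) x y := by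
  classical
  intro n
  induction n with
  | zero =>
      intro x y hmx heq
      have hx0 : x = 0 := eq_zero_of_mass_eq_zero x hmx
      have hs0 : (0 : ℕ) < a + b - 2 := by omega
      have hp := proj_eq_of_eval_eq heq ⟨0, hs0⟩
      have hmy : mass y = 0 := by
        have := congrArg mass hp
        rw [mass_mapDomain, mass_mapDomain, hmx] at this
        omega
      rw [hx0, eq_zero_of_mass_eq_zero y hmy]
      exact AddCon.refl _ 0
  | succ n ih =>
      intro x y hmx heq
      have hxne : x.support.Nonempty := by
        rw [Finsupp.support_nonempty_iff]
        intro hc; rw [hc] at hmx; simp [mass] at hmx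
      obtain ⟨g, hgx⟩ := hxne
      obtain ⟨y', hyy', hgy'⟩ := key_step ha hb g hgx heq
      set x' := x - Finsupp.single g 1 with hx'
      set y'' := y' - Finsupp.single g 1 with hy''
      have hxd : x' + Finsupp.single g 1 = x := sub_single_add x g hgx
      have hyd : y'' + Finsupp.single g 1 = y' := sub_single_add y' g hgy'
      have heq' : evalHom m a b x' = evalHom m a b y'' := by
        have h1 : evalHom m a b x = evalHom m a b y' := heq.trans (addConGen_ker hyy')
        rw [← hxd, ← hyd, map_add, map_add] at h1
        exact add_right_cancel h1
      have hmx' : mass x' = n := by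
        have := congrArg mass hxd
        rw [mass_add, mass_single] at this
        omega
      have hrel := ih x' y'' hmx' heq'
      have : (addConGen (swapRel m a b)) x y' := by
        rw [← hxd, ← hyd]
        exact AddCon.add _ hrel (AddCon.refl _ _)
      exact AddCon.trans _ this (AddCon.symm _ hyy')

end PabAux
namespace PabAux

variable {m a b : ℕ}

def PabSet (m a b : ℕ) : Set (BigM m a b) :=
  {x | (∀ s : Fin (a + b - 2), ∀ p ∈ (x s).support, validPair m a b s p) ∧
    ∀ (s : ℕ) (hs : s + 1 < a + b - 2),
      Finsupp.mapDomain Prod.snd (x ⟨s, by omega⟩)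
        = Finsupp.mapDomain Prod.fst (x ⟨s + 1, hs⟩)}

lemma validPair_pairAt (g : XType m a b) (s : Fin (a + b - 2)) :
    validPair m a b s.val (pairAt s g.val) := by
  obtain ⟨h0, hl, hg0, hgl, hgd⟩ := g.2
  have hs := s.isLt
  have hab : 3 ≤ a + b := by omega
  have hd := hgd s.val (by omega)
  refine ⟨hd.1, hd.2, ?_, ?_⟩
  · intro hs0
    have : (⟨s.val, by omega⟩ : Fin (a + b - 1)) = ⟨0, h0⟩ := Fin.ext hs0
    show g.val ⟨s.val, _⟩ ∈ _
    rw [this]; exact hg0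
  · intro hsl
    have : (⟨s.val + 1, by omega⟩ : Fin (a + b - 1)) = ⟨a + b - 2, hl⟩ :=
      Fin.ext (by show s.val + 1 = a + b - 2; omega)
    show g.val ⟨s.val + 1, _⟩ ∈ _
    rw [this]; exact hgl

lemma eval_mem_PabSet (x : XType m a b →₀ ℕ) : evalHom m a b x ∈ PabSet m a b := by
  classical
  constructor
  · intro s p hp
    rw [evalHom_apply] at hp
    obtain ⟨g, _, hgp⟩ := exists_preimage _ x hp
    rw [← hgp]
    exact validPair_pairAt g s
  · intro s hs
    rw [evalHom_apply, evalHom_apply, ← Finsupp.mapDomain_comp, ← Finsupp.mapDomain_comp]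
    congr 1

lemma PabSet_zero_of_first (x : BigM m a b) (hx : x ∈ PabSet m a b)
    (hab : 4 ≤ a + b) (h0 : x ⟨0, by omega⟩ = 0) : x = 0 := by
  classical
  have hall : ∀ s : ℕ, ∀ hs : s < a + b - 2, x ⟨s, hs⟩ = 0 := by
    intro s
    induction s with
    | zero => intro hs; exact h0
    | succ s ih =>
        intro hs
        have hprev := ih (by omega)
        have hcompat := hx.2 s (by omega)
        rw [hprev] at hcompat
        simp only [Finsupp.mapDomain_zero] at hcompat
        have : mass (x ⟨s + 1, hs⟩) = 0 := by
          have h2 := congrArg mass hcompat.symm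
          rw [mass_mapDomain] at h2
          rw [h2]
          simp [mass]
        exact eq_zero_of_mass_eq_zero _ this
  funext s
  rcases s with ⟨sv, hsv⟩
  exact hall sv hsv

lemma support_sub_single {α : Type*} (x : α →₀ ℕ) (p : α) :
    (x - Finsupp.single p 1).support ⊆ x.support := by
  classical
  intro q hq
  rw [Finsupp.mem_support_iff] at hq ⊢
  rw [Finsupp.tsub_apply] at hq
  omega

set_option maxHeartbeats 1000000 in
lemma surj (ha : 2 ≤ a) (hb : 2 ≤ b) :
    ∀ (n : ℕ) (x : BigM m a b), x ∈ PabSet m a b →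
      mass (x ⟨0, by omega⟩) = n → ∃ w, evalHom m a b w = x := by
  classical
  have hab : 4 ≤ a + b := by omega
  intro n
  induction n with
  | zero =>
      intro x hx hm
      refine ⟨0, ?_⟩
      rw [map_zero, PabSet_zero_of_first x hx hab (eq_zero_of_mass_eq_zero _ hm)]
  | succ n ih =>
      intro x hx hm
      have hne : (x ⟨0, by omega⟩).support.Nonempty := by
        rw [Finsupp.support_nonempty_iff]
        intro hc; rw [hc] at hm; simp [mass] at hm
      obtain ⟨p0, hp0⟩ := hne
      -- build the chain tuple
      have claim : ∀ s : ℕ, s + 1 < a + b - 1 →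
          ∃ c : Fin (a + b - 1) → ZMod m,
            ∀ t (ht : t + 1 < a + b - 1), t ≤ s →
              (c ⟨t, by omega⟩, c ⟨t + 1, ht⟩) ∈ (x ⟨t, by omega⟩).support := by
        intro s
        induction s with
        | zero =>
            intro hs
            refine ⟨fun j => if j.val = 0 then p0.1 else p0.2, ?_⟩
            intro t ht ht0
            interval_cases t
            simpa using hp0
        | succ s ihs =>
            intro hs
            obtain ⟨c, hc⟩ := ihs (by omega)
            have hq : (c ⟨s, by omega⟩, c ⟨s + 1, by omega⟩) ∈ (x ⟨s, by omega⟩).support :=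
              hc s (by omega) le_rfl
            have hsnd : c ⟨s + 1, by omega⟩ ∈
                (Finsupp.mapDomain Prod.snd (x ⟨s, by omega⟩)).support :=
              mem_support_mapDomain Prod.snd _ hq
            rw [hx.2 s (by omega)] at hsnd
            obtain ⟨q', hq', hq'fst⟩ := exists_preimage Prod.fst _ hsnd
            have hj2 : s + 2 < a + b - 1 := by omega
            set jnew : Fin (a + b - 1) := ⟨s + 2, hj2⟩
            refine ⟨Function.update c jnew q'.2, ?_⟩
            intro t ht hts
            rcases Nat.lt_or_ge t (s + 1) with hcase | hcase
            · have h1 : (⟨t, by omega⟩ : Fin (a + b - 1)) ≠ jnew := by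
                intro hcon
                have := congrArg Fin.val hcon
                simp only [jnew] at this
                omega
              have h2 : (⟨t + 1, ht⟩ : Fin (a + b - 1)) ≠ jnew := by
                intro hcon
                have := congrArg Fin.val hcon
                simp only [jnew] at this
                omega
              rw [Function.update_of_ne h1, Function.update_of_ne h2]
              exact hc t ht (by omega)
            · have htv : t = s + 1 := by omega
              subst htv
              have h1 : (⟨s + 1, by omega⟩ : Fin (a + b - 1)) ≠ jnew := by
                intro hcon
                have := congrArg Fin.val hcon
                simp only [jnew] at this
                omega
              have h2 : (⟨s + 1 + 1, ht⟩ : Fin (a + b - 1)) = jnew := by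
                apply Fin.ext; rfl
              rw [Function.update_of_ne h1, h2, Function.update_self]
              have : (c ⟨s + 1, by omega⟩, q'.2) = q' := by
                rw [← hq'fst]
              rw [this]
              exact hq'
      obtain ⟨c, hc⟩ := claim (a + b - 3) (by omega)
      have hcall : ∀ t (ht : t + 1 < a + b - 1),
          (c ⟨t, by omega⟩, c ⟨t + 1, ht⟩) ∈ (x ⟨t, by omega⟩).support :=
        fun t ht => hc t ht (by omega)
      -- c is in Xab
      have hcX : c ∈ Xab m a b := by
        refine ⟨by omega, by omega, ?_, ?_, ?_⟩
        · have hv := hx.1 ⟨0, by omega⟩ _ (hcall 0 (by omega))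
          exact hv.2.2.1 rfl
        · have hv := hx.1 ⟨a + b - 3, by omega⟩ _ (hcall (a + b - 3) (by omega))
          have := hv.2.2.2 rfl
          have heq : (⟨a + b - 3 + 1, by omega⟩ : Fin (a + b - 1))
              = ⟨a + b - 2, by omega⟩ := Fin.ext (by show a + b - 3 + 1 = a + b - 2; omega)
          rw [heq] at this
          exact this
        · intro t ht
          have hv := hx.1 ⟨t, by omega⟩ _ (hcall t ht)
          exact ⟨hv.1, hv.2.1⟩
      set g : XType m a b := ⟨c, hcX⟩
      -- subtract embP c from x
      set x' : BigM m a b := fun s => x s - embP m a b c s with hx'def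
      have hdecomp : ∀ s : Fin (a + b - 2), x s = x' s + Finsupp.single (pairAt s c) 1 := by
        intro s
        have hmem : pairAt s c ∈ (x s).support := by
          have := hcall s.val (by have := s.isLt; omega)
          convert this using 3 <;> rfl
        rw [hx'def]
        simp only [embP_apply]
        exact (sub_single_add (x s) _ hmem).symm
      have hxx' : x = x' + embP m a b c := by
        funext s
        rw [Pi.add_apply, embP_apply, hdecomp s]
      have hx'mem : x' ∈ PabSet m a b := by
        constructor
        · intro s p hp
          apply hx.1 s
          have hsub : (x' s).support ⊆ (x s).support := by
            rw [hx'def]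
            simp only [embP_apply]
            exact support_sub_single _ _
          exact hsub hp
        · intro s hs
          have h1 := hx.2 s hs
          rw [hdecomp ⟨s, by omega⟩, hdecomp ⟨s + 1, hs⟩, Finsupp.mapDomain_add,
            Finsupp.mapDomain_add, Finsupp.mapDomain_single, Finsupp.mapDomain_single] at h1
          have hkey : (pairAt (⟨s, by omega⟩ : Fin (a + b - 2)) c).2
              = (pairAt (⟨s + 1, hs⟩ : Fin (a + b - 2)) c).1 := rfl
          rw [hkey] at h1
          exact add_right_cancel h1
      have hm' : mass (x' ⟨0, by omega⟩) = n := by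
        have := congrArg mass (hdecomp ⟨0, by omega⟩)
        rw [mass_add, mass_single] at this
        omega
      obtain ⟨w', hw'⟩ := ih x' hx'mem hm'
      refine ⟨w' + Finsupp.single g 1, ?_⟩
      rw [map_add, hw', evalHom_single, one_smul, hxx']

end PabAux

/-- The commutative monoid `M` presented by generators `X_{a,b}` and
the swap relations is cancellative and isomorphic to the fiber product submonoid
`P(a,b)`: the congruence generated by the swap relations is exactly the kernel
congruence of the evaluation map onto `P(a,b)` (so the binomial ideal generated by the
swap relations is the full toric ideal, hence prime). -/
theorem presented_monoid_is_Pab (m a b : ℕ) (hm : 2 ≤ m) (ha : 2 ≤ a) (hb : 2 ≤ b)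
    (Pab : AddSubmonoid (BigM m a b))
    (hPab : (Pab : Set (BigM m a b)) =
      {x | (∀ s : Fin (a + b - 2), ∀ p ∈ (x s).support, validPair m a b s p) ∧
        ∀ (s : ℕ) (hs : s + 1 < a + b - 2),
          Finsupp.mapDomain Prod.snd (x ⟨s, by omega⟩)
            = Finsupp.mapDomain Prod.fst (x ⟨s + 1, hs⟩)}) :
    addConGen (swapRel m a b) = AddCon.ker (evalHom m a b) ∧
    (∀ x y z : (addConGen (swapRel m a b)).Quotient, x + y = x + z → y = z) ∧
    Nonempty ((addConGen (swapRel m a b)).Quotient ≃+ Pab) := by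
  classical
  have h1 : addConGen (swapRel m a b) = AddCon.ker (evalHom m a b) := by
    apply le_antisymm
    · exact AddCon.addConGen_le.mpr fun x y h => (AddCon.ker_rel _).mpr (PabAux.swapRel_ker h)
    · intro x y h
      exact PabAux.key ha hb (PabAux.mass x) x y rfl ((AddCon.ker_rel _).mp h)
  have hrange : AddMonoidHom.mrange (evalHom m a b) = Pab := by
    have hPabSet : (Pab : Set (BigM m a b)) = PabAux.PabSet m a b := hPab
    ext x
    rw [AddMonoidHom.mem_mrange, ← SetLike.mem_coe, hPabSet]
    constructor
    · rintro ⟨w, rfl⟩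
      exact PabAux.eval_mem_PabSet w
    · intro hx
      obtain ⟨w, hw⟩ := PabAux.surj ha hb (PabAux.mass (x ⟨0, by omega⟩)) x hx rfl
      exact ⟨w, hw⟩
  refine ⟨h1, ?_, ?_⟩
  · rw [h1]
    intro x y z hxyz
    apply AddCon.kerLift_injective (evalHom m a b)
    have := congrArg (AddCon.kerLift (evalHom m a b)) hxyz
    rw [map_add, map_add] at this
    exact add_left_cancel this
  · rw [h1, ← hrange]
    exact ⟨AddCon.quotientKerEquivRange _⟩
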